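/- (Sign-preservation of the lazy rule) Fix agent i with neighborhood N_i, state x_i ∈ ℝ, measurements y_{ij} = x_j + d_{ij} with |d_{ij}| ≤ ξ, and let u_i = Σ_{j∈N_i}(ỹ_{ij} - x_i) where ỹ = argmin over ỹ_{ij} ∈ [y_{ij}-ξ, y_{ij}+ξ] of |Σ_{j∈N_i}(ỹ_{ij} - x_i)|. Then either u_i = 0, or sign(u_i) = sign(Σ_{j∈N_i}(x_j - x_i)). In particular, if Σ_{j∈N_i}(ỹ_{ij}-x_i) > 0 for all admissible ỹ, then Σ_{j∈N_i}(x_j - x_i) > 0. -/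

import Mathlib

lemma lazy_helper (A B : ℝ) (hA : 0 < A)
    (h : ∀ t : ℝ, 0 ≤ t → t ≤ 1 → |A| ≤ |(1 - t) * A + t * B|) : 0 < B := by
  by_contra hB
  push_neg at hB
  have hAB : 0 < A - B := by linarith
  set t := A / (A - B) with ht
  have ht0 : 0 ≤ t := div_nonneg hA.le hAB.le
  have ht1 : t ≤ 1 := by
    rw [ht, div_le_one hAB]; linarith
  have hz : (1 - t) * A + t * B = 0 := by
    have : t * (A - B) = A := by
      rw [ht]; field_simp
    nlinarith [this]
  have := h t ht0 ht1
  rw [hz, abs_zero] at this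
  have : A = 0 := abs_nonpos_iff.mp this
  linarith

/-- sign preservation of the lazy rule. If ỹ is a feasible minimizer of
|Σ_{j∈N}(ỹ_j - x_i)|, then either the control is zero or its sign agrees with the
sign of Σ_{j∈N}(x_j - x_i); in particular if every feasible choice yields a strictly
positive control then Σ_{j∈N}(x_j - x_i) > 0. -/
theorem lazy_rule_sign_preservation
    {ι : Type*} [DecidableEq ι] (N : Finset ι) (hNne : N.Nonempty)
    (ξ : ℝ) (hξ : 0 < ξ) (xi : ℝ) (x d : ι → ℝ)
    (hd : ∀ j ∈ N, -ξ ≤ d j ∧ d j ≤ ξ)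
    (y : ι → ℝ) (hy : ∀ j ∈ N, y j = x j + d j)
    (ytil : ι → ℝ)
    (hfeas : ∀ j ∈ N, y j - ξ ≤ ytil j ∧ ytil j ≤ y j + ξ)
    (hmin : ∀ z : ι → ℝ, (∀ j ∈ N, y j - ξ ≤ z j ∧ z j ≤ y j + ξ) →
      |∑ j ∈ N, (ytil j - xi)| ≤ |∑ j ∈ N, (z j - xi)|) :
    ((∑ j ∈ N, (ytil j - xi) = 0) ∨
      (0 < ∑ j ∈ N, (ytil j - xi) ∧ 0 < ∑ j ∈ N, (x j - xi)) ∨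
      ((∑ j ∈ N, (ytil j - xi)) < 0 ∧ (∑ j ∈ N, (x j - xi)) < 0)) ∧
    ((∀ z : ι → ℝ, (∀ j ∈ N, y j - ξ ≤ z j ∧ z j ≤ y j + ξ) →
        0 < ∑ j ∈ N, (z j - xi)) → 0 < ∑ j ∈ N, (x j - xi)) := by
  have hxfeas : ∀ j ∈ N, y j - ξ ≤ x j ∧ x j ≤ y j + ξ := by
    intro j hj
    obtain ⟨h1, h2⟩ := hd j hj
    rw [hy j hj]
    constructor <;> linarith
  set A := ∑ j ∈ N, (ytil j - xi) with hAdef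
  set B := ∑ j ∈ N, (x j - xi) with hBdef
  -- interpolation
  have interp : ∀ t : ℝ, 0 ≤ t → t ≤ 1 → |A| ≤ |(1 - t) * A + t * B| := by
    intro t h0 h1
    have hsum : (1 - t) * A + t * B
        = ∑ j ∈ N, (((1 - t) * ytil j + t * x j) - xi) := by
      rw [hAdef, hBdef, Finset.mul_sum, Finset.mul_sum, ← Finset.sum_add_distrib]
      apply Finset.sum_congr rfl
      intro j hj
      ring
    rw [hsum]
    apply hmin
    intro j hj
    obtain ⟨f1, f2⟩ := hfeas j hj
    obtain ⟨g1, g2⟩ := hxfeas j hj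
    constructor
    · nlinarith
    · nlinarith
  have pos : 0 < A → 0 < B := fun hA => lazy_helper A B hA interp
  have neg : A < 0 → B < 0 := by
    intro hA
    have : 0 < -B := by
      apply lazy_helper (-A) (-B) (by linarith)
      intro t h0 h1
      have : (1 - t) * -A + t * -B = -((1 - t) * A + t * B) := by ring
      rw [this, abs_neg, abs_neg]
      exact interp t h0 h1
    linarith
  constructor
  · rcases lt_trichotomy A 0 with h | h | h
    · exact Or.inr (Or.inr ⟨h, neg h⟩)
    · exact Or.inl h
    · exact Or.inr (Or.inl ⟨h, pos h⟩)
  · intro hall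
    exact pos (hall ytil hfeas)
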